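/- arXiv:2305.06527 — 4 statements merged into one kernel-verified Lean document; each statement's English description precedes it below -/
import Mathlib

section
/- Non-stationary phase bound for the Klein–Gordon phase: for every θ ∈ {+1,−1}, every t > 0, every x ∈ ℝ² with |x| ≥ t, and every ξ ∈ ℝ², the gradient ∇φ_θ(ξ) = −θ ξ/⟨ξ⟩ + x/t of the phase φ_θ(ξ) = −θ⟨ξ⟩ + ξ·(x/t) satisfies |x/t − θ ξ/⟨ξ⟩| ≥ 1/(2⟨ξ⟩²). -/
noncomputable section

/-- Japanese bracket `⟨ξ⟩ = (1+|ξ|²)^{1/2}` on `ℝ²`. -/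
def jb (ξ : EuclideanSpace ℝ (Fin 2)) : ℝ := Real.sqrt (1 + ‖ξ‖ ^ 2)

/-- Non-stationary phase bound: for `|x| ≥ t > 0`,
`|∇φ_θ(ξ)| = |x/t − θξ/⟨ξ⟩| ≥ 1/(2⟨ξ⟩²)`. -/
theorem nonstationary_phase_bound (θ : ℝ) (hθ : θ = 1 ∨ θ = -1)
    (t : ℝ) (ht : 0 < t) (x : EuclideanSpace ℝ (Fin 2)) (hx : t ≤ ‖x‖)
    (ξ : EuclideanSpace ℝ (Fin 2)) :
    ‖t⁻¹ • x - (θ / jb ξ) • ξ‖ ≥ 1 / (2 * (jb ξ) ^ 2) := by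
  set r := ‖ξ‖ with hr
  set s := jb ξ with hsdef
  have hr0 : 0 ≤ r := norm_nonneg _
  have hs2 : s ^ 2 = 1 + r ^ 2 := Real.sq_sqrt (by positivity)
  have hs0 : 0 < s := Real.sqrt_pos.mpr (by positivity)
  have hrs : r < s := by nlinarith
  -- norm of first term
  have h1 : 1 ≤ ‖t⁻¹ • x‖ := by
    rw [norm_smul, norm_inv, Real.norm_eq_abs, abs_of_pos ht]
    rw [← div_eq_inv_mul, le_div_iff₀ ht, one_mul]
    exact hx
  -- norm of second term
  have hθ1 : |θ| = 1 := by rcases hθ with h | h <;> simp [h]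
  have h2 : ‖(θ / s) • ξ‖ = r / s := by
    rw [norm_smul, Real.norm_eq_abs, abs_div, hθ1, abs_of_pos hs0, one_div,
      div_eq_inv_mul]
  have h3 : 1 - r / s ≤ ‖t⁻¹ • x - (θ / s) • ξ‖ := by
    have := norm_sub_norm_le (t⁻¹ • x) ((θ / s) • ξ)
    rw [h2] at this
    linarith
  have h4 : 1 / (2 * s ^ 2) ≤ 1 - r / s := by
    rw [div_le_iff₀ (by positivity)]
    have : r / s * s = r := div_mul_cancel₀ r (ne_of_gt hs0)
    nlinarith [sq_nonneg (s - r)]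
  linarith
end
end

section
/- Space-resonance lower bound: for all ξ, η ∈ ℝ², the difference of relativistic velocities satisfies |ξ/⟨ξ⟩ − η/⟨η⟩| ≥ |ξ − η| / (max(⟨ξ⟩, ⟨η⟩))³. In particular, with η replaced by ξ+η, the gradient |∇_η φ_θ(ξ,η)| = |η/⟨η⟩ − (ξ+η)/⟨ξ+η⟩| of the bilinear phase φ_θ(ξ,η) = θ(⟨η⟩ − ⟨ξ+η⟩) is bounded below by |ξ| / (max(⟨η⟩, ⟨ξ+η⟩))³. -/
noncomputable section

lemma key_poly (p q t a b : ℝ) (hp : 0 ≤ p) (hq : 0 ≤ q) (hpq : q ≤ p)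
    (ha : a^2 = 1 + p^2) (hb : b^2 = 1 + q^2) (ha1 : 1 ≤ a) (hb1 : 1 ≤ b)
    (ht : |t| ≤ p*q) :
    0 ≤ p^2*a^4*b^2 + q^2*a^6 - 2*t*a^5*b - p^2*b^2 - q^2*b^2 + 2*t*b^2 := by
  have htu : t ≤ p*q := (abs_le.mp ht).2
  have hba : b ≤ a := by nlinarith
  have ha0 : (0:ℝ) ≤ a := le_trans zero_le_one ha1
  have hb0 : (0:ℝ) ≤ b := le_trans zero_le_one hb1
  have h1 : b ≤ a^5 := by nlinarith [sq_nonneg a, sq_nonneg (a-1), sq_nonneg (a*a-1)]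
  have step : p^2*a^4*b^2 + q^2*a^6 - 2*t*a^5*b - p^2*b^2 - q^2*b^2 + 2*t*b^2
      ≥ p^2*a^4*b^2 + q^2*a^6 - 2*(p*q)*a^5*b - p^2*b^2 - q^2*b^2 + 2*(p*q)*b^2 := by
    nlinarith [mul_nonneg (mul_nonneg hb0 (sub_nonneg.mpr h1)) (sub_nonneg.mpr htu)]
  rcases eq_or_lt_of_le hp with hp0 | hp0
  · have hq0 : q = 0 := le_antisymm (hpq.trans hp0.symm.le) hq
    have ht0 : t = 0 := by
      rw [hq0, mul_zero] at ht
      exact abs_eq_zero.mp (le_antisymm ht (abs_nonneg t))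
    rw [ht0, ← hp0, hq0]; ring_nf; positivity
  · have hsum : 0 < p*b + q*a := by positivity
    have h2 : (q*a)^2 ≤ (p*b)^2 := by nlinarith
    have hd : 0 ≤ p*b - q*a := by nlinarith
    have hab2 : a^2 - b^2 = p^2 - q^2 := by linarith
    have i1 : 0 ≤ p*(a^2 - b^2) := by rw [hab2]; exact mul_nonneg hp (by nlinarith)
    have i2 : 0 ≤ q*a*(a-b) := mul_nonneg (mul_nonneg hq ha0) (sub_nonneg.mpr hba)
    have h3 : 0 ≤ (p-q) * ((p*a^2 + q*a^2) - (p*b^2 + q*a*b)) := by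
      have := mul_nonneg (sub_nonneg.mpr hpq) (by linarith : (0:ℝ) ≤ p*(a^2-b^2) + q*a*(a-b))
      nlinarith [this]
    have e1 : a^2*(p*b-q*a)*(p*b+q*a) = a^2*(p^2-q^2) := by
      linear_combination a^2*p^2*hb - a^2*q^2*ha
    have hkey : (p-q)*b ≤ a^2*(p*b - q*a) := by
      nlinarith [e1, h3, hsum]
    have h0 : 0 ≤ (p-q)*b := mul_nonneg (sub_nonneg.mpr hpq) hb0
    have hsq := mul_self_le_mul_self h0 hkey
    have e2 : (a^2*(p*b-q*a))*(a^2*(p*b-q*a)) - ((p-q)*b)*((p-q)*b)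
        = p^2*a^4*b^2 + q^2*a^6 - 2*(p*q)*a^5*b - p^2*b^2 - q^2*b^2 + 2*(p*q)*b^2 := by ring
    linarith [hsq, step, e2]

lemma jb_sq (ξ : EuclideanSpace ℝ (Fin 2)) : (jb ξ)^2 = 1 + ‖ξ‖^2 :=
  Real.sq_sqrt (by positivity)

lemma one_le_jb (ξ : EuclideanSpace ℝ (Fin 2)) : 1 ≤ jb ξ := by
  rw [show (1:ℝ) = Real.sqrt 1 from Real.sqrt_one.symm]
  exact Real.sqrt_le_sqrt (le_add_of_nonneg_right (by positivity))

lemma helper (ξ η : EuclideanSpace ℝ (Fin 2)) (hba : jb η ≤ jb ξ) :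
    ‖(jb ξ)⁻¹ • ξ - (jb η)⁻¹ • η‖ ≥ ‖ξ - η‖ / (max (jb ξ) (jb η)) ^ 3 := by
  set a := jb ξ with hadef
  set b := jb η with hbdef
  have ha1 : 1 ≤ a := one_le_jb ξ
  have hb1 : 1 ≤ b := one_le_jb η
  have ha0 : 0 < a := lt_of_lt_of_le one_pos ha1
  have hb0 : 0 < b := lt_of_lt_of_le one_pos hb1
  have ha : a^2 = 1 + ‖ξ‖^2 := jb_sq ξ
  have hb : b^2 = 1 + ‖η‖^2 := jb_sq η
  set p := ‖ξ‖
  set q := ‖η‖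
  set t := inner ξ η (𝕜 := ℝ) with htdef
  have hp : 0 ≤ p := norm_nonneg _
  have hq : 0 ≤ q := norm_nonneg _
  have hpq : q ≤ p := by nlinarith
  have ht : |t| ≤ p * q := abs_real_inner_le_norm ξ η
  have K := key_poly p q t a b hp hq hpq ha hb ha1 hb1 ht
  rw [max_eq_left hba, ge_iff_le, div_le_iff₀ (by positivity)]
  have ha' : a ≠ 0 := ha0.ne'
  have hb' : b ≠ 0 := hb0.ne'
  have hd2 : ‖ξ - η‖^2 = p^2 - 2*t + q^2 := by
    rw [norm_sub_sq_real]
  have hv2 : ‖(jb ξ)⁻¹ • ξ - (jb η)⁻¹ • η‖^2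
      = p^2/a^2 - 2*(t/(a*b)) + q^2/b^2 := by
    rw [norm_sub_sq_real, norm_smul, norm_smul, real_inner_smul_left,
      real_inner_smul_right, norm_inv, norm_inv, Real.norm_eq_abs, Real.norm_eq_abs,
      abs_of_pos ha0, abs_of_pos hb0]
    rw [mul_pow, mul_pow, ← htdef]
    field_simp
    rw [← hadef, ← hbdef]
    field_simp
    ring
  have goal2 : ‖ξ - η‖^2 ≤ (‖(jb ξ)⁻¹ • ξ - (jb η)⁻¹ • η‖ * a^3)^2 := by
    rw [mul_pow, hv2, hd2]
    have expand : (p^2/a^2 - 2*(t/(a*b)) + q^2/b^2) * (a^3)^2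
        = (p^2*a^4*b^2 + q^2*a^6 - 2*t*a^5*b)/b^2 := by
      field_simp
      ring
    rw [expand, le_div_iff₀ (by positivity : (0:ℝ) < b^2)]
    nlinarith [K]
  have hnn : 0 ≤ ‖(jb ξ)⁻¹ • ξ - (jb η)⁻¹ • η‖ * a^3 := by positivity
  exact le_of_pow_le_pow_left₀ two_ne_zero hnn goal2

/-- Space-resonance lower bound for the relativistic velocity difference. -/
theorem space_resonance_lower_bound :
    (∀ ξ η : EuclideanSpace ℝ (Fin 2),
      ‖(jb ξ)⁻¹ • ξ - (jb η)⁻¹ • η‖ ≥ ‖ξ - η‖ / (max (jb ξ) (jb η)) ^ 3) ∧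
    (∀ ξ η : EuclideanSpace ℝ (Fin 2),
      ‖(jb η)⁻¹ • η - (jb (ξ + η))⁻¹ • (ξ + η)‖ ≥
        ‖ξ‖ / (max (jb η) (jb (ξ + η))) ^ 3) := by
  have main : ∀ ξ η : EuclideanSpace ℝ (Fin 2),
      ‖(jb ξ)⁻¹ • ξ - (jb η)⁻¹ • η‖ ≥ ‖ξ - η‖ / (max (jb ξ) (jb η)) ^ 3 := by
    intro ξ η
    rcases le_total (jb η) (jb ξ) with h | h
    · exact helper ξ η h
    · have := helper η ξ h
      rwa [norm_sub_rev, norm_sub_rev η, max_comm] at this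
  refine ⟨main, fun ξ η => ?_⟩
  have := main η (ξ + η)
  rwa [show η - (ξ + η) = -ξ by abel, norm_neg] at this
end
end

section
/- Null-structure (Lipschitz) upper bound for the relativistic velocity map: for all ξ, η ∈ ℝ², |ξ/⟨ξ⟩ − η/⟨η⟩| ≤ 2|ξ − η| / max(⟨ξ⟩, ⟨η⟩); in particular the map ξ ↦ ξ/⟨ξ⟩ is 2-Lipschitz and the multiplier ξ/⟨ξ⟩ − (ξ−η)/⟨ξ−η⟩ vanishes at η = 0 with size O(|η|/⟨ξ⟩). -/
noncomputable section

/-- The relativistic velocity map `ξ ↦ ξ/⟨ξ⟩`. -/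
def vel (ξ : EuclideanSpace ℝ (Fin 2)) : EuclideanSpace ℝ (Fin 2) := (jb ξ)⁻¹ • ξ

lemma jb_pos (ξ : EuclideanSpace ℝ (Fin 2)) : 0 < jb ξ :=
  Real.sqrt_pos.2 (by positivity)

lemma norm_le_jb (ξ : EuclideanSpace ℝ (Fin 2)) : ‖ξ‖ ≤ jb ξ := by
  have := Real.sqrt_le_sqrt (show ‖ξ‖ ^ 2 ≤ 1 + ‖ξ‖ ^ 2 by linarith)
  rwa [Real.sqrt_sq (norm_nonneg _)] at this

lemma sqrt_lip {x y : ℝ} (hx : 0 ≤ x) (hy : 0 ≤ y) :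
    |Real.sqrt (1 + x ^ 2) - Real.sqrt (1 + y ^ 2)| ≤ |x - y| := by
  set a := Real.sqrt (1 + x ^ 2) with ha
  set b := Real.sqrt (1 + y ^ 2) with hb
  have ha2 : a ^ 2 = 1 + x ^ 2 := Real.sq_sqrt (by positivity)
  have hb2 : b ^ 2 = 1 + y ^ 2 := Real.sq_sqrt (by positivity)
  have ha0 : 0 ≤ a := Real.sqrt_nonneg _
  have hb0 : 0 ≤ b := Real.sqrt_nonneg _
  have hax : x ≤ a := by nlinarith
  have hby : y ≤ b := by nlinarith
  have hab : 0 < a + b := by nlinarith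
  rw [abs_sub_le_iff]
  constructor <;>
    nlinarith [le_abs_self (x - y), neg_abs_le (x - y), abs_nonneg (x - y)]

lemma jb_lip (ξ η : EuclideanSpace ℝ (Fin 2)) : |jb ξ - jb η| ≤ ‖ξ - η‖ := by
  have h1 := sqrt_lip (norm_nonneg ξ) (norm_nonneg η)
  have h2 : |‖ξ‖ - ‖η‖| ≤ ‖ξ - η‖ := abs_norm_sub_norm_le ξ η
  exact le_trans h1 h2

lemma key {ξ η : EuclideanSpace ℝ (Fin 2)} (h : jb η ≤ jb ξ) :
    ‖vel ξ - vel η‖ ≤ 2 * ‖ξ - η‖ / jb ξ := by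
  have hA : 0 < jb ξ := jb_pos ξ
  have hB : 0 < jb η := jb_pos η
  set A := jb ξ with hAdef
  set B := jb η with hBdef
  have decomp : vel ξ - vel η = A⁻¹ • (ξ - η) + (A⁻¹ - B⁻¹) • η := by
    simp only [vel, smul_sub, sub_smul, ← hAdef, ← hBdef]
    abel
  have hM : ‖η‖ ≤ B := norm_le_jb η
  have hN : A - B ≤ ‖ξ - η‖ := le_trans (le_abs_self _) (jb_lip ξ η)
  have hinv : A⁻¹ ≤ B⁻¹ := inv_anti₀ hB h
  have step1 : ‖vel ξ - vel η‖ ≤ A⁻¹ * ‖ξ - η‖ + (B⁻¹ - A⁻¹) * ‖η‖ := by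
    rw [decomp]
    refine (norm_add_le _ _).trans ?_
    rw [norm_smul, norm_smul, Real.norm_eq_abs, Real.norm_eq_abs,
      abs_of_pos (by positivity), abs_of_nonpos (by linarith)]
    apply le_of_eq; ring
  have step2 : (B⁻¹ - A⁻¹) * ‖η‖ ≤ A⁻¹ * ‖ξ - η‖ := by
    have heq : B⁻¹ - A⁻¹ = (A - B) / (A * B) := by
      field_simp
    rw [heq, div_mul_eq_mul_div, div_le_iff₀ (by positivity)]
    have hr : A⁻¹ * ‖ξ - η‖ * (A * B) = ‖ξ - η‖ * B := by
      field_simp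
    rw [hr]
    nlinarith [norm_nonneg η, norm_nonneg (ξ - η)]
  have step3 : 2 * ‖ξ - η‖ / A = A⁻¹ * ‖ξ - η‖ + A⁻¹ * ‖ξ - η‖ := by
    field_simp; ring
  linarith

theorem part1 (ξ η : EuclideanSpace ℝ (Fin 2)) :
    ‖vel ξ - vel η‖ ≤ 2 * ‖ξ - η‖ / max (jb ξ) (jb η) := by
  rcases le_total (jb η) (jb ξ) with h | h
  · rw [max_eq_left h]; exact key h
  · rw [max_eq_right h, ← norm_neg, neg_sub, ← norm_neg (ξ - η), neg_sub]
    exact key h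

/-- Null-structure (Lipschitz) upper bound for the relativistic velocity map. -/
theorem velocity_lipschitz_bound :
    (∀ ξ η : EuclideanSpace ℝ (Fin 2),
      ‖vel ξ - vel η‖ ≤ 2 * ‖ξ - η‖ / max (jb ξ) (jb η)) ∧
    LipschitzWith 2 vel ∧
    (∀ ξ η : EuclideanSpace ℝ (Fin 2),
      ‖vel ξ - vel (ξ - η)‖ ≤ 2 * ‖η‖ / jb ξ) := by
  refine ⟨part1, ?_, ?_⟩
  · apply LipschitzWith.of_dist_le_mul
    intro ξ η
    have hc : ((2 : NNReal) : ℝ) = 2 := by norm_num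
    rw [dist_eq_norm, dist_eq_norm, hc]
    refine (part1 ξ η).trans ?_
    apply div_le_self (by positivity)
    exact le_max_of_le_left (one_le_jb ξ)
  · intro ξ η
    have h := part1 ξ (ξ - η)
    rw [sub_sub_cancel] at h
    refine h.trans ?_
    gcongr
    · exact jb_pos ξ
    · exact le_max_left _ _
end
end

section
/- Coifman–Meyer type bilinear estimate (Lemma 2.4, bilinear case): let p, q ∈ [2,∞] with 1/p + 1/q = 1/2. There exists a constant C > 0 (depending only on p, q and the Fourier normalization) such that for every kernel K ∈ L¹(ℝ² × ℝ²; ℂ), with associated multiplier m(ξ,η) := ∬_{ℝ²×ℝ²} K(x,y) e^{i x·ξ} e^{i y·η} dx dy, and all Schwartz functions ψ, φ : ℝ² → ℂ, one has ‖ ξ ↦ ∫_{ℝ²} m(ξ,η) ψ̂(ξ−η) φ̂(η) dη ‖_{L²(ℝ²)} ≤ C ‖K‖_{L¹(ℝ⁴)} ‖ψ‖_{L^p(ℝ²)} ‖φ‖_{L^q(ℝ²)}, where ψ̂ denotes the Fourier transform of ψ. -/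
noncomputable section

open MeasureTheory
open scoped ENNReal RealInnerProductSpace

abbrev E2 : Type := EuclideanSpace ℝ (Fin 2)

/-- The multiplier associated with a kernel `K ∈ L¹(ℝ²×ℝ²)`:
`m(ξ,η) = ∬ K(x,y) e^{ix·ξ} e^{iy·η} dx dy`. -/
def multiplier2 (K : E2 × E2 → ℂ) (ξ η : E2) : ℂ :=
  ∫ p : E2 × E2, K p *
    Complex.exp (Complex.I * ((⟪p.1, ξ⟫ : ℝ) + (⟪p.2, η⟫ : ℝ)))

namespace CMaux

open Complex SchwartzMap
open scoped FourierTransform Convolution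

lemma sq_integrable_of_bounded {f : E2 → ℂ} (hf : Integrable f volume) {M : ℝ}
    (hM : ∀ x, ‖f x‖ ≤ M) : Integrable (fun x => ‖f x‖ ^ 2) volume := by
  refine (hf.norm.const_mul M).mono' ?_ ?_
  · exact (hf.aestronglyMeasurable.norm.mul hf.aestronglyMeasurable.norm).congr
      (by filter_upwards with x using (sq (‖f x‖)) ▸ rfl)
  · filter_upwards with x
    have h0 : (0:ℝ) ≤ ‖f x‖ := norm_nonneg _
    have : ‖f x‖ ^ 2 ≤ M * ‖f x‖ := by nlinarith [hM x]
    simpa [_root_.abs_of_nonneg (pow_nonneg h0 2)] using this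

lemma fourier_conj {u : E2 → ℂ} (x : E2) :
    𝓕 (fun v => (starRingEnd ℂ) (u v)) x = (starRingEnd ℂ) (𝓕⁻ u x) := by
  rw [Real.fourier_eq', Real.fourierInv_eq', ← integral_conj]
  congr 1
  funext v
  rw [smul_eq_mul, smul_eq_mul, map_mul, ← Complex.exp_conj]
  congr 2
  rw [map_mul, Complex.conj_I, Complex.conj_ofReal]
  push_cast
  ring

lemma integrable_conj' {f : E2 → ℂ} (hf : Integrable f volume) :
    Integrable (fun x => (starRingEnd ℂ) (f x)) volume := by
  refine ⟨RCLike.continuous_conj.comp_aestronglyMeasurable hf.1, ?_⟩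
  simpa [HasFiniteIntegral] using hf.2

lemma plancherel_aux {u : E2 → ℂ} (hu : Integrable u volume) (hcu : Continuous u)
    (h'u : Integrable (𝓕 u) volume) :
    ∫ ξ, ‖𝓕 u ξ‖ ^ 2 = ∫ x, ‖u x‖ ^ 2 := by
  have hinv : 𝓕⁻ (𝓕 u) = u := hcu.fourierInv_fourier_eq hu h'u
  have hg : Integrable (fun ξ => (starRingEnd ℂ) (𝓕 u ξ)) volume := integrable_conj' h'u
  have hflip : (innerₗ E2).flip = innerₗ E2 :=
    LinearMap.ext fun x => LinearMap.ext fun y => by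
      rw [LinearMap.flip_apply, innerₗ_apply_apply, innerₗ_apply_apply, real_inner_comm]
  have key := VectorFourier.integral_fourierIntegral_smul_eq_flip (L := innerₗ E2)
    Real.continuous_fourierChar continuous_inner hu hg
  rw [hflip] at key
  simp only [smul_eq_mul] at key
  have key2 : ∫ ξ, 𝓕 u ξ * (starRingEnd ℂ) (𝓕 u ξ) = ∫ x, u x * (starRingEnd ℂ) (u x) := by
    calc ∫ ξ, 𝓕 u ξ * (starRingEnd ℂ) (𝓕 u ξ)
        = ∫ x, u x * 𝓕 (fun ξ => (starRingEnd ℂ) (𝓕 u ξ)) x := key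
      _ = ∫ x, u x * (starRingEnd ℂ) (u x) := by
          congr 1; funext x; rw [fourier_conj, hinv]
  have e1 : ∀ z : ℂ, z * (starRingEnd ℂ) z = ((‖z‖ ^ 2 : ℝ) : ℂ) := by
    intro z; rw [Complex.mul_conj]; norm_cast; rw [Complex.normSq_eq_norm_sq]
  simp_rw [e1] at key2
  have cint : ∀ g : E2 → ℝ, ∫ x, ((g x : ℝ) : ℂ) ∂(volume : Measure E2)
      = ((∫ x, g x ∂(volume : Measure E2) : ℝ) : ℂ) := fun g => integral_ofReal
  apply Complex.ofReal_injective
  rw [← cint, ← cint]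
  exact key2

lemma eLpNorm_two_eq {f : E2 → ℂ} (hsq : Integrable (fun x => ‖f x‖ ^ 2) volume) :
    eLpNorm f 2 volume = ENNReal.ofReal (∫ x, ‖f x‖ ^ 2) ^ (1/2 : ℝ) := by
  rw [eLpNorm_eq_lintegral_rpow_enorm_toReal (by norm_num) (by norm_num)]
  rw [ofReal_integral_eq_lintegral_ofReal hsq
    (Filter.Eventually.of_forall fun x => by positivity)]
  have hex : (2:ℝ≥0∞).toReal = (2:ℝ) := by norm_num
  rw [hex]
  congr 1
  apply lintegral_congr
  intro x
  rw [← ofReal_norm_eq_enorm, show ((2:ℝ)) = ((2:ℕ):ℝ) by norm_num,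
      ENNReal.rpow_natCast, ← ENNReal.ofReal_pow (norm_nonneg _)]

lemma norm_exp_I_mul (t : ℝ) : ‖Complex.exp (Complex.I * (t:ℂ))‖ = 1 := by
  simp [Complex.norm_exp]

variable (ψ φ : SchwartzMap E2 ℂ) (y : E2)

/-- the inner function: convolution-type integral -/
def Hfun (ξ : E2) : ℂ :=
  ∫ η : E2, Complex.exp (Complex.I * (⟪y, η⟫ : ℝ)) * 𝓕 ⇑ψ (ξ - η) * 𝓕 ⇑φ η

/-- the modulated product -/
def ufun (x : E2) : ℂ := ψ x * φ (x + (2 * Real.pi)⁻¹ • y)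

lemma ufun_integrable : Integrable (ufun ψ φ y) volume := by
  have hb : ∀ x : E2, ‖φ (x + (2 * Real.pi)⁻¹ • y)‖ ≤ (SchwartzMap.seminorm ℝ 0 0) φ :=
    fun x => φ.norm_le_seminorm ℝ _
  have : Integrable (fun x : E2 => φ (x + (2 * Real.pi)⁻¹ • y) * ψ x) volume :=
    ψ.integrable.bdd_mul
      ((φ.continuous.comp (continuous_id.add continuous_const)).aestronglyMeasurable)
      (Filter.Eventually.of_forall hb)
  exact this.congr (Filter.Eventually.of_forall fun x => by rw [ufun]; ring)

lemma ufun_continuous : Continuous (ufun ψ φ y) :=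
  (ψ.continuous).mul (φ.continuous.comp (continuous_id.add continuous_const))

lemma conv_eq (ξ : E2) : Hfun ψ φ y ξ = 𝓕 (ufun ψ φ y) ξ := by
  classical
  set c : E2 := (2 * Real.pi)⁻¹ • y with hc
  set Fφ : SchwartzMap E2 ℂ := fourierTransformCLM ℂ φ with hFφ
  have hFφ_eq : ⇑Fφ = 𝓕 ⇑φ := rfl
  set F : E2 → E2 → ℂ := fun η x =>
    Complex.exp (Complex.I * (⟪y, η⟫ : ℝ)) *
      (Complex.exp (((-2 * Real.pi * ⟪x, ξ - η⟫ : ℝ) : ℂ) * Complex.I) * ψ x) * Fφ η with hF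
  have step1 : ∀ η : E2, Complex.exp (Complex.I * (⟪y, η⟫ : ℝ)) * 𝓕 ⇑ψ (ξ - η) * 𝓕 ⇑φ η
      = ∫ x, F η x := by
    intro η
    rw [Real.fourier_eq']
    simp_rw [smul_eq_mul]
    rw [← integral_const_mul, ← integral_mul_const]
    simp only [← hFφ_eq]
    rfl
  have hFint : Integrable (Function.uncurry F) (volume.prod volume) := by
    have hG : Integrable (fun z : E2 × E2 => ‖Fφ z.1‖ * ‖ψ z.2‖) (volume.prod volume) :=
      Fφ.integrable.norm.mul_prod ψ.integrable.norm
    refine hG.mono' ?_ ?_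
    · apply Continuous.aestronglyMeasurable
      apply Continuous.mul
      apply Continuous.mul
      · exact Complex.continuous_exp.comp (continuous_const.mul
          (Complex.continuous_ofReal.comp ((continuous_const.inner continuous_fst))))
      · apply Continuous.mul
        · exact Complex.continuous_exp.comp ((Complex.continuous_ofReal.comp
            ((continuous_const.mul continuous_const).mul
              (continuous_snd.inner (continuous_const.sub continuous_fst)))).mul continuous_const)
        · exact ψ.continuous.comp continuous_snd
      · exact Fφ.continuous.comp continuous_fst
    · filter_upwards with z
      rcases z with ⟨η, x⟩
      simp only [Function.uncurry_apply_pair, hF, norm_mul, norm_exp_I_mul,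
        Complex.norm_exp_ofReal_mul_I, one_mul]
      exact le_of_eq (by ring)
  have hswap : ∫ η, ∫ x, F η x = ∫ x, ∫ η, F η x := integral_integral_swap hFint
  have h2π : (2 * Real.pi) * (2 * Real.pi)⁻¹ = 1 :=
    mul_inv_cancel₀ (by positivity)
  have step2 : ∀ x η : E2, F η x =
      (Complex.exp (((-2 * Real.pi * ⟪x, ξ⟫ : ℝ) : ℂ) * Complex.I) * ψ x) *
      (Complex.exp (((2 * Real.pi * ⟪η, x + c⟫ : ℝ) : ℂ) * Complex.I) * Fφ η) := by
    intro x η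
    have hph : Complex.exp (Complex.I * (⟪y, η⟫ : ℝ)) *
        Complex.exp (((-2 * Real.pi * ⟪x, ξ - η⟫ : ℝ) : ℂ) * Complex.I)
        = Complex.exp (((-2 * Real.pi * ⟪x, ξ⟫ : ℝ) : ℂ) * Complex.I) *
          Complex.exp (((2 * Real.pi * ⟪η, x + c⟫ : ℝ) : ℂ) * Complex.I) := by
      rw [← Complex.exp_add, ← Complex.exp_add]
      congr 1
      rw [inner_sub_right, inner_add_right, real_inner_smul_right]
      have h1 : ⟪η, x⟫ = ⟪x, η⟫ := real_inner_comm x η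
      have h2 : ⟪η, y⟫ = ⟪y, η⟫ := real_inner_comm y η
      rw [h1, h2]
      have hπ : (Real.pi : ℂ) * (Real.pi : ℂ)⁻¹ = 1 :=
        mul_inv_cancel₀ (by exact_mod_cast Real.pi_ne_zero)
      push_cast
      linear_combination (-(((⟪y, η⟫ : ℝ) : ℂ)) * Complex.I) * hπ
    calc F η x = (Complex.exp (Complex.I * (⟪y, η⟫ : ℝ)) *
          Complex.exp (((-2 * Real.pi * ⟪x, ξ - η⟫ : ℝ) : ℂ) * Complex.I)) * (ψ x * Fφ η) := by
          simp only [hF]; ring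
      _ = _ := by rw [hph]; ring
  have hφinv : 𝓕⁻ (𝓕 ⇑φ) = ⇑φ :=
    φ.continuous.fourierInv_fourier_eq φ.integrable Fφ.integrable
  have step3 : ∀ x : E2, (∫ η, F η x) =
      Complex.exp (((-2 * Real.pi * ⟪x, ξ⟫ : ℝ) : ℂ) * Complex.I) * ψ x * φ (x + c) := by
    intro x
    have : (∫ η, F η x) = (Complex.exp (((-2 * Real.pi * ⟪x, ξ⟫ : ℝ) : ℂ) * Complex.I) * ψ x) *
        ∫ η, Complex.exp (((2 * Real.pi * ⟪η, x + c⟫ : ℝ) : ℂ) * Complex.I) * Fφ η := by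
      rw [← integral_const_mul]
      exact integral_congr_ae (Filter.Eventually.of_forall fun η => step2 x η)
    rw [this]
    have hfi : (∫ η, Complex.exp (((2 * Real.pi * ⟪η, x + c⟫ : ℝ) : ℂ) * Complex.I) * Fφ η)
        = 𝓕⁻ (𝓕 ⇑φ) (x + c) := by
      rw [Real.fourierInv_eq']
      simp_rw [smul_eq_mul]
      rfl
    rw [hfi, hφinv, mul_assoc]
  calc Hfun ψ φ y ξ = ∫ η, ∫ x, F η x := by
        rw [Hfun]; exact integral_congr_ae (Filter.Eventually.of_forall step1)
    _ = ∫ x, ∫ η, F η x := hswap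
    _ = ∫ x, Complex.exp (((-2 * Real.pi * ⟪x, ξ⟫ : ℝ) : ℂ) * Complex.I) * ψ x * φ (x + c) :=
        integral_congr_ae (Filter.Eventually.of_forall step3)
    _ = 𝓕 (ufun ψ φ y) ξ := by
        rw [Real.fourier_eq']
        simp_rw [smul_eq_mul, ufun, mul_assoc]
        rfl

lemma Hfun_integrable : Integrable (Hfun ψ φ y) volume := by
  classical
  set Fψ : SchwartzMap E2 ℂ := fourierTransformCLM ℂ ψ with hFψ
  set Fφ : SchwartzMap E2 ℂ := fourierTransformCLM ℂ φ with hFφd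
  have hphase : Continuous fun η : E2 => Complex.exp (Complex.I * (⟪y, η⟫ : ℝ)) :=
    Complex.continuous_exp.comp (continuous_const.mul
      (Complex.continuous_ofReal.comp (continuous_const.inner continuous_id)))
  have hf : Integrable (fun η : E2 => Complex.exp (Complex.I * (⟪y, η⟫ : ℝ)) * Fφ η) volume :=
    Fφ.integrable.bdd_mul (c := 1) hphase.aestronglyMeasurable
      (Filter.Eventually.of_forall fun η => le_of_eq (norm_exp_I_mul _))
  have conv_int : Integrable
      ((fun η : E2 => Complex.exp (Complex.I * (⟪y, η⟫ : ℝ)) * Fφ η)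
        ⋆[ContinuousLinearMap.mul ℝ ℂ, volume] ⇑Fψ) volume :=
    hf.integrable_convolution (L := ContinuousLinearMap.mul ℝ ℂ) Fψ.integrable
  refine conv_int.congr (Filter.Eventually.of_forall fun ξ => ?_)
  show _ = Hfun ψ φ y ξ
  rw [convolution_def, Hfun]
  refine integral_congr_ae (Filter.Eventually.of_forall fun η => ?_)
  simp only [ContinuousLinearMap.mul_apply']
  have h1 : (⇑Fψ : E2 → ℂ) = 𝓕 ⇑ψ := rfl
  have h2 : (⇑Fφ : E2 → ℂ) = 𝓕 ⇑φ := rfl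
  rw [h1, h2]
  ring

lemma Hfun_bound : ∃ M : ℝ, ∀ ξ, ‖Hfun ψ φ y ξ‖ ≤ M := by
  classical
  set Fψ : SchwartzMap E2 ℂ := fourierTransformCLM ℂ ψ with hFψ
  set Fφ : SchwartzMap E2 ℂ := fourierTransformCLM ℂ φ with hFφd
  set Mψ : ℝ := (SchwartzMap.seminorm ℝ 0 0) Fψ with hMψ
  refine ⟨Mψ * ∫ η, ‖Fφ η‖, fun ξ => ?_⟩
  rw [Hfun]
  calc ‖∫ η : E2, Complex.exp (Complex.I * (⟪y, η⟫ : ℝ)) * 𝓕 ⇑ψ (ξ - η) * 𝓕 ⇑φ η‖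
      ≤ ∫ η : E2, ‖Complex.exp (Complex.I * (⟪y, η⟫ : ℝ)) * 𝓕 ⇑ψ (ξ - η) * 𝓕 ⇑φ η‖ :=
        norm_integral_le_integral_norm _
    _ ≤ ∫ η : E2, Mψ * ‖Fφ η‖ := by
        refine integral_mono_of_nonneg (Filter.Eventually.of_forall fun η => norm_nonneg _)
          (Fφ.integrable.norm.const_mul Mψ) (Filter.Eventually.of_forall fun η => ?_)
        have h1 : (𝓕 ⇑ψ : E2 → ℂ) = ⇑Fψ := rfl
        have h2 : (𝓕 ⇑φ : E2 → ℂ) = ⇑Fφ := rfl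
        show ‖Complex.exp (Complex.I * (⟪y, η⟫ : ℝ)) * Fψ (ξ - η) * Fφ η‖ ≤ Mψ * ‖Fφ η‖
        rw [norm_mul, norm_mul, norm_exp_I_mul, one_mul]
        exact mul_le_mul_of_nonneg_right (Fψ.norm_le_seminorm ℝ _) (norm_nonneg _)
    _ = Mψ * ∫ η, ‖Fφ η‖ := integral_const_mul _ _

lemma ufun_bound : ∃ M : ℝ, ∀ x, ‖ufun ψ φ y x‖ ≤ M := by
  refine ⟨(SchwartzMap.seminorm ℝ 0 0) ψ * (SchwartzMap.seminorm ℝ 0 0) φ, fun x => ?_⟩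
  rw [ufun, norm_mul]
  exact mul_le_mul (ψ.norm_le_seminorm ℝ _) (φ.norm_le_seminorm ℝ _) (norm_nonneg _)
    ((apply_nonneg _ _))


lemma claim3 (p q : ℝ≥0∞) (hpq : 1 / p + 1 / q = 1 / 2) (ψ φ : SchwartzMap E2 ℂ) (y : E2) :
    eLpNorm (Hfun ψ φ y) 2 volume ≤ eLpNorm ⇑ψ p volume * eLpNorm ⇑φ q volume := by
  have hu_int := ufun_integrable ψ φ y
  have hu_cont := ufun_continuous ψ φ y
  have hHeq : Hfun ψ φ y = 𝓕 (ufun ψ φ y) := funext (conv_eq ψ φ y)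
  have hFu_int : Integrable (𝓕 (ufun ψ φ y)) volume := hHeq ▸ Hfun_integrable ψ φ y
  obtain ⟨M1, hM1⟩ := Hfun_bound ψ φ y
  obtain ⟨M2, hM2⟩ := ufun_bound ψ φ y
  have hsqF : Integrable (fun ξ => ‖𝓕 (ufun ψ φ y) ξ‖ ^ 2) volume :=
    sq_integrable_of_bounded hFu_int (fun ξ => by rw [← hHeq]; exact hM1 ξ)
  have hsqu : Integrable (fun x => ‖ufun ψ φ y x‖ ^ 2) volume :=
    sq_integrable_of_bounded hu_int hM2
  rw [hHeq, eLpNorm_two_eq hsqF, plancherel_aux hu_int hu_cont hFu_int, ← eLpNorm_two_eq hsqu]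
  have hsmul : (⇑ψ • fun x : E2 => φ (x + (2 * Real.pi)⁻¹ • y)) = ufun ψ φ y := by
    funext x
    simp only [Pi.smul_apply', smul_eq_mul]
    rfl
  haveI : ENNReal.HolderTriple p q 2 := ⟨by simpa [one_div] using hpq⟩
  have hH := eLpNorm_smul_le_mul_eLpNorm (μ := volume) (p := p) (q := q) (r := 2)
    (f := fun x : E2 => φ (x + (2 * Real.pi)⁻¹ • y)) (φ := ⇑ψ)
    ((φ.continuous.comp (continuous_id.add continuous_const)).aestronglyMeasurable)
    ψ.continuous.aestronglyMeasurable
  rw [hsmul] at hH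
  refine hH.trans (le_of_eq ?_)
  congr 1
  exact eLpNorm_comp_measurePreserving φ.continuous.aestronglyMeasurable
    (measurePreserving_add_right volume _)

end CMaux

/-- Coifman–Meyer type bilinear estimate. -/
theorem coifman_meyer_bilinear (p q : ℝ≥0∞) (hp : 2 ≤ p) (hq : 2 ≤ q)
    (hpq : 1 / p + 1 / q = 1 / 2) :
    ∃ C : ℝ, 0 < C ∧
      ∀ K : E2 × E2 → ℂ, Integrable K →
        ∀ ψ φ : SchwartzMap E2 ℂ,
          eLpNorm (fun ξ : E2 =>
              ∫ η : E2, multiplier2 K ξ η *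
                FourierTransform.fourier (⇑ψ : E2 → ℂ) (ξ - η) *
                FourierTransform.fourier (⇑φ : E2 → ℂ) η) 2 volume ≤
            ENNReal.ofReal C * ENNReal.ofReal (∫ pt : E2 × E2, ‖K pt‖) *
              eLpNorm (⇑ψ) p volume * eLpNorm (⇑φ) q volume := by
  classical
  haveI hsf1 : SFinite ((volume : Measure (E2 × E2)).prod (volume : Measure (E2 × E2))) :=
    MeasureTheory.Measure.prod.instSFinite
  haveI hsf2 : SFinite ((volume : Measure E2).prod (volume : Measure (E2 × E2))) :=
    MeasureTheory.Measure.prod.instSFinite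
  refine ⟨1, one_pos, fun K hK ψ φ => ?_⟩
  set Fψ : SchwartzMap E2 ℂ := SchwartzMap.fourierTransformCLM ℂ ψ with hFψd
  set Fφ : SchwartzMap E2 ℂ := SchwartzMap.fourierTransformCLM ℂ φ with hFφd
  have hFψ : (⇑Fψ : E2 → ℂ) = FourierTransform.fourier (⇑ψ : E2 → ℂ) := rfl
  have hFφ : (⇑Fφ : E2 → ℂ) = FourierTransform.fourier (⇑φ : E2 → ℂ) := rfl
  set B : ℝ≥0∞ := eLpNorm (⇑ψ) p volume * eLpNorm (⇑φ) q volume with hB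
  -- Step 1 : pointwise Fubini identity
  have step1 : ∀ ξ : E2,
      (∫ η : E2, multiplier2 K ξ η * FourierTransform.fourier (⇑ψ : E2 → ℂ) (ξ - η) *
          FourierTransform.fourier (⇑φ : E2 → ℂ) η)
        = ∫ z : E2 × E2, K z * Complex.exp (Complex.I * (⟪z.1, ξ⟫ : ℝ)) *
            CMaux.Hfun ψ φ z.2 ξ := by
    intro ξ
    have e1 : ∀ η : E2, multiplier2 K ξ η * FourierTransform.fourier (⇑ψ : E2 → ℂ) (ξ - η) *
        FourierTransform.fourier (⇑φ : E2 → ℂ) η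
        = ∫ z : E2 × E2, K z *
            Complex.exp (Complex.I * ((⟪z.1, ξ⟫ : ℝ) + (⟪z.2, η⟫ : ℝ))) *
            FourierTransform.fourier (⇑ψ : E2 → ℂ) (ξ - η) * FourierTransform.fourier (⇑φ : E2 → ℂ) η := by
      intro η
      rw [multiplier2, ← integral_mul_const, ← integral_mul_const]
    have hint : Integrable (Function.uncurry fun (η : E2) (z : E2 × E2) =>
        K z * Complex.exp (Complex.I * ((⟪z.1, ξ⟫ : ℝ) + (⟪z.2, η⟫ : ℝ))) *
          FourierTransform.fourier (⇑ψ : E2 → ℂ) (ξ - η) * FourierTransform.fourier (⇑φ : E2 → ℂ) η)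
        ((volume : Measure E2).prod (volume : Measure (E2 × E2))) := by
      have hbd : Integrable (fun w : E2 × (E2 × E2) =>
          (‖FourierTransform.fourier (⇑ψ : E2 → ℂ) (ξ - w.1)‖ * ‖FourierTransform.fourier (⇑φ : E2 → ℂ) w.1‖) * ‖K w.2‖)
          ((volume : Measure E2).prod (volume : Measure (E2 × E2))) := by
        have hsub : Integrable (fun η : E2 => ‖FourierTransform.fourier (⇑ψ : E2 → ℂ) (ξ - η)‖ *
            ‖FourierTransform.fourier (⇑φ : E2 → ℂ) η‖) volume := by
          rw [← hFψ, ← hFφ]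
          refine Integrable.bdd_mul (c := (SchwartzMap.seminorm ℝ 0 0) Fψ) Fφ.integrable.norm
            ((Fψ.continuous.comp (continuous_const.sub continuous_id)).norm.aestronglyMeasurable) ?_
          exact Filter.Eventually.of_forall fun η => by
            simpa using Fψ.norm_le_seminorm ℝ (ξ - η)
        exact hsub.mul_prod hK.norm
      refine hbd.mono' ?_ ?_
      · rw [← hFψ, ← hFφ]
        refine ((AEStronglyMeasurable.mul ?_ ?_).mul ?_).mul ?_
        · exact hK.1.comp_snd
        · refine Continuous.aestronglyMeasurable ?_
          exact Complex.continuous_exp.comp (continuous_const.mul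
            ((Complex.continuous_ofReal.comp (continuous_snd.fst.inner continuous_const)).add
              (Complex.continuous_ofReal.comp (continuous_snd.snd.inner continuous_fst))))
        · exact (Fψ.continuous.comp (continuous_const.sub continuous_fst)).aestronglyMeasurable
        · exact (Fφ.continuous.comp continuous_fst).aestronglyMeasurable
      · filter_upwards with w
        rcases w with ⟨η, z⟩
        simp only [Function.uncurry_apply_pair, norm_mul]
        rw [← Complex.ofReal_add, CMaux.norm_exp_I_mul, mul_one]
        exact le_of_eq (by ring)
    have hswap := integral_integral_swap hint
    calc (∫ η : E2, multiplier2 K ξ η * FourierTransform.fourier (⇑ψ : E2 → ℂ) (ξ - η) *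
          FourierTransform.fourier (⇑φ : E2 → ℂ) η)
        = ∫ η : E2, ∫ z : E2 × E2, K z *
            Complex.exp (Complex.I * ((⟪z.1, ξ⟫ : ℝ) + (⟪z.2, η⟫ : ℝ))) *
            FourierTransform.fourier (⇑ψ : E2 → ℂ) (ξ - η) * FourierTransform.fourier (⇑φ : E2 → ℂ) η :=
          integral_congr_ae (Filter.Eventually.of_forall e1)
      _ = ∫ z : E2 × E2, ∫ η : E2, K z *
            Complex.exp (Complex.I * ((⟪z.1, ξ⟫ : ℝ) + (⟪z.2, η⟫ : ℝ))) *
            FourierTransform.fourier (⇑ψ : E2 → ℂ) (ξ - η) * FourierTransform.fourier (⇑φ : E2 → ℂ) η := hswap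
      _ = ∫ z : E2 × E2, K z * Complex.exp (Complex.I * (⟪z.1, ξ⟫ : ℝ)) *
            CMaux.Hfun ψ φ z.2 ξ := by
          refine integral_congr_ae (Filter.Eventually.of_forall fun z => ?_)
          simp only [CMaux.Hfun]
          rw [← integral_const_mul]
          refine integral_congr_ae (Filter.Eventually.of_forall fun η => ?_)
          show K z * Complex.exp (Complex.I * ((⟪z.1, ξ⟫ : ℝ) + (⟪z.2, η⟫ : ℝ))) *
              FourierTransform.fourier (⇑ψ : E2 → ℂ) (ξ - η) * FourierTransform.fourier (⇑φ : E2 → ℂ) η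
            = K z * Complex.exp (Complex.I * (⟪z.1, ξ⟫ : ℝ)) *
              (Complex.exp (Complex.I * (⟪z.2, η⟫ : ℝ)) * FourierTransform.fourier (⇑ψ : E2 → ℂ) (ξ - η) *
                FourierTransform.fourier (⇑φ : E2 → ℂ) η)
          rw [mul_add, Complex.exp_add]
          ring
  -- measurability of H
  have hHsm : StronglyMeasurable (fun pq : E2 × E2 => CMaux.Hfun ψ φ pq.1 pq.2) := by
    have hcont : Continuous (fun w : (E2 × E2) × E2 =>
        Complex.exp (Complex.I * (⟪w.1.1, w.2⟫ : ℝ)) * FourierTransform.fourier (⇑ψ : E2 → ℂ) (w.1.2 - w.2) *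
          FourierTransform.fourier (⇑φ : E2 → ℂ) w.2) := by
      rw [← hFψ, ← hFφ]
      exact ((Complex.continuous_exp.comp (continuous_const.mul
        (Complex.continuous_ofReal.comp (continuous_fst.fst.inner continuous_snd)))).mul
        (Fψ.continuous.comp (continuous_fst.snd.sub continuous_snd))).mul
        (Fφ.continuous.comp continuous_snd)
    exact hcont.stronglyMeasurable.integral_prod_right'
  have hHm : Measurable (fun pq : E2 × E2 => CMaux.Hfun ψ φ pq.1 pq.2) := hHsm.measurable
  set W : E2 × E2 → ℝ≥0∞ := fun z => (‖K z‖₊ : ℝ≥0∞) with hWdef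
  set G : E2 × E2 → E2 → ℝ≥0∞ := fun z ξ => (‖CMaux.Hfun ψ φ z.2 ξ‖₊ : ℝ≥0∞) with hGdef
  have hWmeas : AEMeasurable W volume := hK.1.enorm
  have hGy : ∀ y : E2, Measurable (fun ξ => (‖CMaux.Hfun ψ φ y ξ‖₊ : ℝ≥0∞)) := fun y =>
    (hHm.comp (measurable_const.prodMk measurable_id)).enorm
  have hfz : ∀ ξ : E2, AEMeasurable (fun z => W z * G z ξ) volume := fun ξ =>
    hWmeas.mul ((hHm.comp (measurable_snd.prodMk measurable_const)).enorm).aemeasurable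
  have hexp0 : ∀ t : ℝ, ‖Complex.exp (Complex.I * (t : ℂ))‖₊ = 1 := fun t =>
    NNReal.coe_injective (by simpa using CMaux.norm_exp_I_mul t)
  have pt : ∀ ξ : E2, ((‖∫ η : E2, multiplier2 K ξ η * FourierTransform.fourier (⇑ψ : E2 → ℂ) (ξ - η) *
      FourierTransform.fourier (⇑φ : E2 → ℂ) η‖₊ : ℝ≥0∞)) ≤ ∫⁻ z, W z * G z ξ ∂volume := by
    intro ξ
    rw [step1 ξ]
    refine (enorm_integral_le_lintegral_enorm _).trans (le_of_eq (lintegral_congr fun z => ?_))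
    simp only [enorm_eq_nnnorm, nnnorm_mul, hexp0, mul_one, ENNReal.coe_mul, hWdef, hGdef]
  -- Cauchy-Schwarz + claim3 bound
  have hsn : ∀ y : E2, (∫⁻ ξ, (‖CMaux.Hfun ψ φ y ξ‖₊ : ℝ≥0∞) ^ (2:ℝ) ∂volume) ^ (1/2:ℝ)
      = eLpNorm (CMaux.Hfun ψ φ y) 2 volume := fun y => by
    rw [eLpNorm_eq_lintegral_rpow_enorm_toReal (by norm_num) (by norm_num)]
    norm_num [enorm_eq_nnnorm]
  have hCS : ∀ y y' : E2, (∫⁻ ξ, (‖CMaux.Hfun ψ φ y ξ‖₊ : ℝ≥0∞) *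
      (‖CMaux.Hfun ψ φ y' ξ‖₊ : ℝ≥0∞) ∂volume) ≤ B * B := by
    intro y y'
    have h22 : (2:ℝ).HolderConjugate 2 := Real.HolderConjugate.two_two
    have hcs := ENNReal.lintegral_mul_le_Lp_mul_Lq volume h22
      (hGy y).aemeasurable (hGy y').aemeasurable
    simp only [Pi.mul_apply] at hcs
    refine hcs.trans ?_
    rw [hsn y, hsn y']
    exact mul_le_mul' (CMaux.claim3 p q hpq ψ φ y) (CMaux.claim3 p q hpq ψ φ y')
  -- the big chain
  have key : (∫⁻ ξ, ((‖∫ η : E2, multiplier2 K ξ η * FourierTransform.fourier (⇑ψ : E2 → ℂ) (ξ - η) *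
      FourierTransform.fourier (⇑φ : E2 → ℂ) η‖₊ : ℝ≥0∞)) ^ (2:ℝ) ∂volume)
      ≤ (((∫⁻ z, W z ∂volume) * B) ^ (2:ℝ)) := by
    have hbig : AEMeasurable (Function.uncurry fun (ξ : E2) (w : (E2 × E2) × (E2 × E2)) =>
        (W w.1 * G w.1 ξ) * (W w.2 * G w.2 ξ))
        ((volume : Measure E2).prod ((volume : Measure (E2 × E2)).prod
          (volume : Measure (E2 × E2)))) := by
      have qfst : MeasureTheory.Measure.QuasiMeasurePreserving
          (fun w : E2 × ((E2 × E2) × (E2 × E2)) => w.2.1)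
          (((volume : Measure E2)).prod (((volume : Measure (E2 × E2))).prod
            ((volume : Measure (E2 × E2))))) (volume : Measure (E2 × E2)) :=
        MeasureTheory.Measure.quasiMeasurePreserving_fst.comp
          MeasureTheory.Measure.quasiMeasurePreserving_snd
      have qsnd : MeasureTheory.Measure.QuasiMeasurePreserving
          (fun w : E2 × ((E2 × E2) × (E2 × E2)) => w.2.2)
          (((volume : Measure E2)).prod (((volume : Measure (E2 × E2))).prod
            ((volume : Measure (E2 × E2))))) (volume : Measure (E2 × E2)) :=
        MeasureTheory.Measure.quasiMeasurePreserving_snd.comp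
          MeasureTheory.Measure.quasiMeasurePreserving_snd
      have hW1 : AEMeasurable (fun w : E2 × ((E2 × E2) × (E2 × E2)) => W w.2.1) _ :=
        hWmeas.comp_quasiMeasurePreserving qfst
      have hW2 : AEMeasurable (fun w : E2 × ((E2 × E2) × (E2 × E2)) => W w.2.2) _ :=
        hWmeas.comp_quasiMeasurePreserving qsnd
      have hG1 : Measurable (fun w : E2 × ((E2 × E2) × (E2 × E2)) => G w.2.1 w.1) :=
        (hHm.comp ((measurable_snd.comp (measurable_fst.comp measurable_snd)).prodMk
          measurable_fst)).enorm
      have hG2 : Measurable (fun w : E2 × ((E2 × E2) × (E2 × E2)) => G w.2.2 w.1) :=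
        (hHm.comp ((measurable_snd.comp (measurable_snd.comp measurable_snd)).prodMk
          measurable_fst)).enorm
      exact ((hW1.mul hG1.aemeasurable).mul (hW2.mul hG2.aemeasurable))
    have hWW : AEMeasurable (fun w : (E2 × E2) × (E2 × E2) => W w.1 * W w.2)
        ((volume : Measure (E2 × E2)).prod (volume : Measure (E2 × E2))) :=
      hWmeas.comp_fst.mul hWmeas.comp_snd
    calc (∫⁻ ξ, ((‖∫ η : E2, multiplier2 K ξ η * FourierTransform.fourier (⇑ψ : E2 → ℂ) (ξ - η) *
          FourierTransform.fourier (⇑φ : E2 → ℂ) η‖₊ : ℝ≥0∞)) ^ (2:ℝ) ∂volume)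
        ≤ ∫⁻ ξ, (∫⁻ z, W z * G z ξ ∂volume) ^ (2:ℝ) ∂volume :=
          lintegral_mono fun ξ => ENNReal.rpow_le_rpow (pt ξ) (by norm_num)
      _ = ∫⁻ ξ, ∫⁻ w : (E2 × E2) × (E2 × E2),
            (W w.1 * G w.1 ξ) * (W w.2 * G w.2 ξ) ∂(volume.prod volume) ∂volume := by
          refine lintegral_congr fun ξ => ?_
          rw [show ((2:ℝ)) = ((2:ℕ):ℝ) by norm_num, ENNReal.rpow_natCast, sq,
            ← lintegral_prod_mul (hfz ξ) (hfz ξ)]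
      _ = ∫⁻ w : (E2 × E2) × (E2 × E2), ∫⁻ ξ,
            (W w.1 * G w.1 ξ) * (W w.2 * G w.2 ξ) ∂volume ∂(volume.prod volume) :=
          lintegral_lintegral_swap hbig
      _ ≤ ∫⁻ w : (E2 × E2) × (E2 × E2), (W w.1 * W w.2) * (B * B) ∂(volume.prod volume) := by
          refine lintegral_mono fun w => ?_
          have rearr : ∀ ξ, (W w.1 * G w.1 ξ) * (W w.2 * G w.2 ξ)
              = (W w.1 * W w.2) * (G w.1 ξ * G w.2 ξ) := fun ξ => by ring
          calc (∫⁻ ξ, (W w.1 * G w.1 ξ) * (W w.2 * G w.2 ξ) ∂volume)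
              = ∫⁻ ξ, (W w.1 * W w.2) * (G w.1 ξ * G w.2 ξ) ∂volume :=
                lintegral_congr rearr
            _ = (W w.1 * W w.2) * ∫⁻ ξ, G w.1 ξ * G w.2 ξ ∂volume :=
                lintegral_const_mul'' _ ((hGy w.1.2).mul (hGy w.2.2)).aemeasurable
            _ ≤ (W w.1 * W w.2) * (B * B) :=
                mul_le_mul_right (hCS w.1.2 w.2.2) _
      _ = (∫⁻ w : (E2 × E2) × (E2 × E2), W w.1 * W w.2 ∂(volume.prod volume)) * (B * B) :=
          lintegral_mul_const'' _ hWW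
      _ = ((∫⁻ z, W z ∂volume) * (∫⁻ z, W z ∂volume)) * (B * B) := by
          rw [lintegral_prod_mul hWmeas hWmeas]
      _ = (((∫⁻ z, W z ∂volume) * B) ^ (2:ℝ)) := by
          rw [show ((2:ℝ)) = ((2:ℕ):ℝ) by norm_num, ENNReal.rpow_natCast, sq]
          ring
  -- conclude
  have hfin : eLpNorm (fun ξ : E2 =>
      ∫ η : E2, multiplier2 K ξ η * FourierTransform.fourier (⇑ψ : E2 → ℂ) (ξ - η) *
        FourierTransform.fourier (⇑φ : E2 → ℂ) η) 2 volume ≤ (∫⁻ z, W z ∂volume) * B := by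
    rw [eLpNorm_eq_lintegral_rpow_enorm_toReal (by norm_num) (by norm_num)]
    have hex : (2:ℝ≥0∞).toReal = (2:ℝ) := by norm_num
    rw [hex]
    calc (∫⁻ ξ, ((‖∫ η : E2, multiplier2 K ξ η * FourierTransform.fourier (⇑ψ : E2 → ℂ) (ξ - η) *
          FourierTransform.fourier (⇑φ : E2 → ℂ) η‖₊ : ℝ≥0∞)) ^ (2:ℝ) ∂volume) ^ (1/(2:ℝ))
        ≤ ((((∫⁻ z, W z ∂volume) * B) ^ (2:ℝ)) : ℝ≥0∞) ^ (1/(2:ℝ)) :=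
          ENNReal.rpow_le_rpow key (by norm_num)
      _ = (∫⁻ z, W z ∂volume) * B := by
          rw [← ENNReal.rpow_mul]
          norm_num
  refine hfin.trans (le_of_eq ?_)
  have hNK : ENNReal.ofReal (∫ z : E2 × E2, ‖K z‖) = ∫⁻ z, (‖K z‖₊ : ℝ≥0∞) ∂volume :=
    ofReal_integral_norm_eq_lintegral_enorm hK
  rw [ENNReal.ofReal_one, one_mul, hNK, hB, hWdef]
  ring
end
end
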